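/- For any generalized pattern language L, the Kleene star L* equals L ∪ {ε}; consequently generalized pattern languages are closed under Kleene star. -/

import Mathlib

open Computability

variable {α : Type*}

/-- The full language `Σ*` of all words over the alphabet `α`. -/
def sigmaStar : Language α := Set.univ

/-- The pattern language `Σ*·a₁·Σ*·a₂·Σ*···Σ*·a_d·Σ*` determined by the symbols
`a₁, …, a_d`. -/
def pattLang : List α → Language α
  | [] => sigmaStar
  | a :: as => sigmaStar * ({[a]} * pattLang as)
/-- A generalized pattern language is a finite union of languages, each of which is
`∅`, `{ε}`, or a pattern language. -/
def IsGenPatt (L : Language α) : Prop :=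
  ∃ Ls : List (Language α),
    (∀ M ∈ Ls, M = ((∅ : Set (List α)) : Language α) ∨ M = ({[]} : Language α) ∨
      ∃ as : List α, M = pattLang as) ∧
    L = {w : List α | ∃ M ∈ Ls, w ∈ M}


lemma pattLang_ext (as : List α) : ∀ u v x : List α, x ∈ pattLang as → (u ++ x ++ v) ∈ pattLang as := by
  induction as with
  | nil => intro u v x _; exact Set.mem_univ _
  | cons a as ih =>
    intro u v x hx
    rcases hx with ⟨p, hp, q, hq, rfl⟩
    rcases hq with ⟨r, hr, s, hs, rfl⟩
    refine ⟨u ++ p, Set.mem_univ _, r ++ (s ++ v), ⟨r, hr, s ++ v, by exact (by simpa using ih [] v s hs : s ++ v ∈ pattLang as), rfl⟩, by simp⟩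

/-- For any generalized pattern language `L`, the Kleene star `L∗` equals `L ∪ {ε}`;
consequently generalized pattern languages are closed under Kleene star. -/
theorem genPatt_kstar (L : Language α) (hL : IsGenPatt L) :
    L∗ = ((L : Set (List α)) ∪ {([] : List α)} : Set (List α)) ∧ IsGenPatt (L∗) := by
  obtain ⟨Ls, hLs, hLeq⟩ := hL
  have hsub : ∀ S : List (List α), (∀ y ∈ S, y ∈ L) → S.flatten ∈ ((L : Set (List α)) ∪ {([] : List α)} : Set (List α)) := by
    intro S
    induction S with
    | nil => intro _; right; rfl
    | cons w S ih =>
      intro h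
      have hw := h w (List.mem_cons_self)
      have hj := ih (fun y hy => h y (List.mem_cons_of_mem _ hy))
      rw [hLeq] at hw
      obtain ⟨M, hM, hwM⟩ := hw
      rcases hLs M hM with h0 | h1 | ⟨as, rfl⟩
      · subst h0; exact absurd hwM (Set.notMem_empty _)
      · subst h1
        have hw0 : w = [] := hwM
        subst hw0; simpa using hj
      · left
        rw [hLeq]
        exact ⟨pattLang as, hM, by simpa using pattLang_ext as [] S.flatten w hwM⟩
  have key : L∗ = ((L : Set (List α)) ∪ {([] : List α)} : Set (List α)) := by
    ext w
    constructor
    · intro hw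
      rw [Language.mem_kstar] at hw
      obtain ⟨S, rfl, hS⟩ := hw
      exact hsub S hS
    · rintro (hw | hw)
      · exact Language.mem_kstar.mpr ⟨[w], by simp, by simpa using (show w ∈ L from hw)⟩
      · rcases hw
        exact Language.mem_kstar.mpr ⟨[], by simp⟩
  refine ⟨key, ({[]} : Language α) :: Ls, ?_, ?_⟩
  · intro M hM
    rcases List.mem_cons.mp hM with h | h
    · right; left; exact h
    · exact hLs M h
  · ext w
    have : w ∈ L∗ ↔ w ∈ ((L : Set (List α)) ∪ {([] : List α)} : Set (List α)) := by rw [key]; exact Iff.rfl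
    show w ∈ L∗ ↔ ∃ M ∈ ({[]} : Language α) :: Ls, w ∈ M
    constructor
    · intro hw
      rcases this.mp hw with h | h
      · rw [hLeq] at h
        obtain ⟨M, hM, hwM⟩ := h
        exact ⟨M, List.mem_cons_of_mem _ hM, hwM⟩
      · exact ⟨({[]} : Language α), List.mem_cons_self, h⟩
    · rintro ⟨M, hM, hwM⟩
      rcases List.mem_cons.mp hM with h | h
      · subst h; exact this.mpr (Or.inr hwM)
      · exact this.mpr (Or.inl (by rw [hLeq]; exact ⟨M, h, hwM⟩))
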